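/- For the ASVD2 method with Λ the largest subset of {n : σₙ > ε} satisfying Σ_{n∈Λ}|⟨y,vₙ⟩|²/σₙ² ≤ c²‖y‖², the error satisfies ‖f − P_Λ f‖ ≤ ‖f − T_N z‖ + max{√ε, ‖f − T_N z‖/(c‖y‖ − (1/√ε)‖f − T_N z‖ − 2‖z‖)} ‖z‖ for every z ∈ ℂᴺ with (1/√ε)‖f − T_N z‖ + 2‖z‖ < c‖y‖. -/

import Mathlib

open scoped ComplexInnerProductSpace

set_option maxHeartbeats 2000000 in
theorem stmt_17 {H : Type*} [NormedAddCommGroup H] [InnerProductSpace ℂ H]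
    {N : ℕ} (φ : Fin N → H) (σ : Fin N → ℝ)
    (v : Fin N → EuclideanSpace ℂ (Fin N)) (hv : Orthonormal ℂ v)
    (G : Matrix (Fin N) (Fin N) ℂ) (hG : ∀ m k, G m k = ⟪φ m, φ k⟫)
    (heig : ∀ n i, G.mulVec (fun j => v n j) i = (σ n : ℂ) * v n i)
    (T : EuclideanSpace ℂ (Fin N) → H) (hT : ∀ z, T z = ∑ n, z n • φ n)
    (ξ : Fin N → H) (hξ : ∀ n, ξ n = T (v n))
    (hσ : ∀ n, 0 ≤ σ n) (ε c : ℝ) (hε : 0 < ε) (hc : 0 < c)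
    (f : H) (y : EuclideanSpace ℂ (Fin N)) (hy : ∀ n, y n = ⟪φ n, f⟫)
    (Λ : Finset (Fin N))
    (hΛsub : Λ ⊆ Finset.univ.filter (fun n => ε < σ n))
    (hΛbd : ∑ n ∈ Λ, ‖⟪v n, y⟫‖ ^ 2 / (σ n) ^ 2 ≤ c ^ 2 * ‖y‖ ^ 2)
    (hΛmax : ∀ Λ' : Finset (Fin N), Λ' ⊆ Finset.univ.filter (fun n => ε < σ n) →
      (∑ n ∈ Λ', ‖⟪v n, y⟫‖ ^ 2 / (σ n) ^ 2 ≤ c ^ 2 * ‖y‖ ^ 2) → Λ'.card ≤ Λ.card)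
    (z : EuclideanSpace ℂ (Fin N))
    (hz : (1 / Real.sqrt ε) * ‖f - T z‖ + 2 * ‖z‖ < c * ‖y‖) :
    ‖f - ∑ n ∈ Λ, (⟪ξ n, f⟫ / (σ n : ℂ)) • ξ n‖ ≤
      ‖f - T z‖ +
        max (Real.sqrt ε)
          (‖f - T z‖ / (c * ‖y‖ - (1 / Real.sqrt ε) * ‖f - T z‖ - 2 * ‖z‖)) * ‖z‖ := by
  classical
  have hGsymm : ∀ j k, (starRingEnd ℂ) (G j k) = G k j := by
    intro j k; rw [hG, hG, inner_conj_symm]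
  have hξT : ∀ m (w : EuclideanSpace ℂ (Fin N)), ⟪ξ m, T w⟫ = (σ m : ℂ) * ⟪v m, w⟫ := by
    intro m w
    have key : ∀ k, ∑ j, (starRingEnd ℂ) (v m j) * G j k = (σ m : ℂ) * (starRingEnd ℂ) (v m k) := by
      intro k
      have h1 := congrArg (starRingEnd ℂ) (heig m k)
      rw [Matrix.mulVec, dotProduct] at h1
      rw [map_sum, map_mul] at h1
      simp only [map_mul, Complex.conj_ofReal] at h1
      calc ∑ j, (starRingEnd ℂ) (v m j) * G j k
          = ∑ j, (starRingEnd ℂ) (G k j) * (starRingEnd ℂ) (v m j) := by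
            refine Finset.sum_congr rfl fun j _ => ?_
            rw [hGsymm]; ring
        _ = (σ m : ℂ) * (starRingEnd ℂ) (v m k) := h1
    rw [hξ m, hT, hT]
    rw [sum_inner]
    simp only [inner_smul_left]
    calc ∑ j, (starRingEnd ℂ) (v m j) * ⟪φ j, ∑ k, w k • φ k⟫
        = ∑ j, ∑ k, (starRingEnd ℂ) (v m j) * (w k * G j k) := by
          refine Finset.sum_congr rfl fun j _ => ?_
          rw [inner_sum, Finset.mul_sum]
          refine Finset.sum_congr rfl fun k _ => ?_
          rw [inner_smul_right, hG]
      _ = ∑ k, w k * ∑ j, (starRingEnd ℂ) (v m j) * G j k := by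
          rw [Finset.sum_comm]
          refine Finset.sum_congr rfl fun k _ => ?_
          rw [Finset.mul_sum]
          refine Finset.sum_congr rfl fun j _ => ?_
          ring
      _ = ∑ k, w k * ((σ m : ℂ) * (starRingEnd ℂ) (v m k)) := by
          refine Finset.sum_congr rfl fun k _ => by rw [key]
      _ = (σ m : ℂ) * ⟪v m, w⟫ := by
          rw [PiLp.inner_apply, Finset.mul_sum]
          refine Finset.sum_congr rfl fun k _ => ?_
          simp [RCLike.inner_apply]; ring
  have hξξ : ∀ m n, ⟪ξ m, ξ n⟫ = if m = n then (σ m : ℂ) else 0 := by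
    intro m n
    rw [hξ n, hξT m (v n), orthonormal_iff_ite.mp hv]
    by_cases h : m = n <;> simp [h]
  have hξf : ∀ n, ⟪ξ n, f⟫ = ⟪v n, y⟫ := by
    intro n
    rw [hξ, hT, sum_inner, PiLp.inner_apply]
    refine Finset.sum_congr rfl fun j _ => ?_
    rw [inner_smul_left, hy, RCLike.inner_apply]; ring
  set g := f - T z with hgdef
  -- orthonormal basis from v
  have hspan : ⊤ ≤ Submodule.span ℂ (Set.range v) := by
    rw [hv.linearIndependent.span_eq_top_of_card_eq_finrank'
      (by simp [finrank_euclideanSpace])]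
  set b : OrthonormalBasis (Fin N) ℂ (EuclideanSpace ℂ (Fin N)) := OrthonormalBasis.mk hv hspan
    with hbdef
  have hb : ∀ n, b n = v n := fun n => by rw [hbdef, OrthonormalBasis.coe_mk]
  set a : Fin N → ℂ := fun n => ⟪v n, z⟫ with hadef
  have hzexp : ∑ n, a n • v n = z := by
    have := b.sum_repr' z
    simpa [hb] using this
  have haB : ∀ s : Finset (Fin N), ∑ n ∈ s, ‖a n‖ ^ 2 ≤ ‖z‖ ^ 2 :=
    fun s => hv.sum_inner_products_le z
  have hTz : T z = ∑ n, a n • ξ n := by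
    rw [hT]
    calc ∑ k, z k • φ k = ∑ k, (∑ n, a n * v n k) • φ k := by
          refine Finset.sum_congr rfl fun k _ => ?_
          congr 1
          conv_lhs => rw [← hzexp]
          have := Finset.sum_apply k Finset.univ fun n => a n • v n
          rw [WithLp.ofLp_sum, this]
          simp [PiLp.smul_apply, smul_eq_mul]
      _ = ∑ n, a n • ξ n := by
          simp_rw [Finset.sum_smul, mul_smul]
          rw [Finset.sum_comm]
          refine Finset.sum_congr rfl fun n _ => ?_
          rw [hξ, hT, Finset.smul_sum]
  have hξg : ∀ n, ε < σ n → ‖⟪v n, y⟫‖ / σ n ≤ ‖⟪ξ n, g⟫‖ / σ n + ‖a n‖ := by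
    intro n hn
    have hσn : (0:ℝ) < σ n := lt_trans hε hn
    have h1 : ⟪v n, y⟫ = ⟪ξ n, g⟫ + (σ n : ℂ) * a n := by
      rw [← hξf, hgdef, inner_sub_right, hξT n z]
      ring
    have h2 : ‖⟪v n, y⟫‖ ≤ ‖⟪ξ n, g⟫‖ + σ n * ‖a n‖ := by
      rw [h1]
      refine le_trans (norm_add_le _ _) ?_
      gcongr
      rw [norm_mul, Complex.norm_real, Real.norm_of_nonneg hσn.le]
    rw [div_add' _ _ _ hσn.ne', div_le_div_iff_of_pos_right hσn]
    linarith
  -- Bessel for normalized ξ over admissible sets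
  have hBes : ∀ Λ' : Finset (Fin N), Λ' ⊆ Finset.univ.filter (fun n => ε < σ n) →
      ∑ n ∈ Λ', ‖⟪ξ n, g⟫‖ ^ 2 / σ n ≤ ‖g‖ ^ 2 := by
    intro Λ' hsub
    have hmem : ∀ k : {x // x ∈ Λ'}, ε < σ k :=
      fun k => (Finset.mem_filter.mp (hsub k.2)).2
    set e : {x // x ∈ Λ'} → H := fun k => ((Real.sqrt (σ k))⁻¹ : ℂ) • ξ k with hedef
    have he : Orthonormal ℂ e := by
      rw [orthonormal_iff_ite]
      intro i j
      have hσi : (0:ℝ) < σ i := lt_trans hε (hmem i)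
      have hσj : (0:ℝ) < σ j := lt_trans hε (hmem j)
      simp only [hedef, inner_smul_left, inner_smul_right, hξξ]
      by_cases h : (i : Fin N) = (j : Fin N)
      · have : i = j := Subtype.ext h
        subst this
        simp only [if_pos rfl, if_pos]
        rw [← Complex.ofReal_inv, Complex.conj_ofReal]
        have hr : ((Real.sqrt (σ i))⁻¹ * ((Real.sqrt (σ i))⁻¹ * σ i) : ℝ) = 1 := by
          rw [← Real.mul_self_sqrt hσi.le]; field_simp
          rw [Real.sqrt_sq (Real.sqrt_nonneg _)]
        exact_mod_cast hr
      · have hij : i ≠ j := fun hh => h (congrArg _ hh)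
        simp [h, hij]
    have hB := he.sum_inner_products_le (s := Finset.univ) g
    have hcoe : ∑ k : {x // x ∈ Λ'}, ‖⟪e k, g⟫‖ ^ 2
        = ∑ n ∈ Λ', ‖⟪ξ n, g⟫‖ ^ 2 / σ n := by
      rw [← Finset.sum_coe_sort Λ' (fun n => ‖⟪ξ n, g⟫‖ ^ 2 / σ n)]
      refine Finset.sum_congr rfl fun k _ => ?_
      have hσk : (0:ℝ) < σ k := lt_trans hε (hmem k)
      rw [hedef]
      simp only [inner_smul_left, norm_mul]
      rw [← Complex.ofReal_inv, Complex.conj_ofReal, Complex.norm_real,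
        Real.norm_of_nonneg (by positivity)]
      rw [mul_pow, ← Real.sqrt_inv, Real.sq_sqrt (by positivity : (0:ℝ) ≤ (σ k)⁻¹)]
      ring
    rw [← hcoe]
    exact hB
  -- Minkowski inequality for finite sums
  have mink : ∀ (s : Finset (Fin N)) (p q : Fin N → ℝ), (∀ i ∈ s, 0 ≤ p i) → (∀ i ∈ s, 0 ≤ q i) →
      ∑ i ∈ s, (p i + q i) ^ 2 ≤
        (Real.sqrt (∑ i ∈ s, p i ^ 2) + Real.sqrt (∑ i ∈ s, q i ^ 2)) ^ 2 := by
    intro s p q hp hq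
    have hP : (0:ℝ) ≤ ∑ i ∈ s, p i ^ 2 := Finset.sum_nonneg fun i _ => sq_nonneg _
    have hQ : (0:ℝ) ≤ ∑ i ∈ s, q i ^ 2 := Finset.sum_nonneg fun i _ => sq_nonneg _
    have hPQ : (0:ℝ) ≤ ∑ i ∈ s, p i * q i :=
      Finset.sum_nonneg fun i hi => mul_nonneg (hp i hi) (hq i hi)
    have hCS0 := Finset.sum_mul_sq_le_sq_mul_sq s p q
    have hCS : ∑ i ∈ s, p i * q i ≤
        Real.sqrt (∑ i ∈ s, p i ^ 2) * Real.sqrt (∑ i ∈ s, q i ^ 2) := by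
      calc ∑ i ∈ s, p i * q i = Real.sqrt ((∑ i ∈ s, p i * q i) ^ 2) :=
            (Real.sqrt_sq hPQ).symm
        _ ≤ Real.sqrt ((∑ i ∈ s, p i ^ 2) * ∑ i ∈ s, q i ^ 2) := Real.sqrt_le_sqrt hCS0
        _ = _ := Real.sqrt_mul hP _
    have hexp : ∑ i ∈ s, (p i + q i) ^ 2
        = ∑ i ∈ s, p i ^ 2 + 2 * ∑ i ∈ s, p i * q i + ∑ i ∈ s, q i ^ 2 := by
      rw [Finset.mul_sum, ← Finset.sum_add_distrib, ← Finset.sum_add_distrib]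
      exact Finset.sum_congr rfl fun i _ => by ring
    nlinarith [Real.sq_sqrt hP, Real.sq_sqrt hQ]
  -- bound on the budget sum for admissible sets
  have hbound : ∀ Λ' : Finset (Fin N), Λ' ⊆ Finset.univ.filter (fun n => ε < σ n) →
      ∑ n ∈ Λ', ‖⟪v n, y⟫‖ ^ 2 / σ n ^ 2 ≤ ((1 / Real.sqrt ε) * ‖g‖ + ‖z‖) ^ 2 := by
    intro Λ' hsub
    have hmem : ∀ n ∈ Λ', ε < σ n := fun n hn => (Finset.mem_filter.mp (hsub hn)).2
    have hsε : 0 < Real.sqrt ε := Real.sqrt_pos.mpr hε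
    set p : Fin N → ℝ := fun n => (1 / Real.sqrt ε) * (‖⟪ξ n, g⟫‖ / Real.sqrt (σ n)) with hpdef
    set q : Fin N → ℝ := fun n => ‖a n‖ with hqdef
    have hstep : ∀ n ∈ Λ', ‖⟪v n, y⟫‖ ^ 2 / σ n ^ 2 ≤ (p n + q n) ^ 2 := by
      intro n hn
      have hσn : (0:ℝ) < σ n := lt_trans hε (hmem n hn)
      have hsn : 0 < Real.sqrt (σ n) := Real.sqrt_pos.mpr hσn
      have h1 : ‖⟪v n, y⟫‖ / σ n ≤ p n + q n := by
        refine le_trans (hξg n (hmem n hn)) ?_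
        have h2 : ‖⟪ξ n, g⟫‖ / σ n ≤ p n := by
          rw [hpdef]
          have hεσ : Real.sqrt ε ≤ Real.sqrt (σ n) := Real.sqrt_le_sqrt (hmem n hn).le
          calc ‖⟪ξ n, g⟫‖ / σ n
              = (1 / Real.sqrt (σ n)) * (‖⟪ξ n, g⟫‖ / Real.sqrt (σ n)) := by
                rw [← Real.mul_self_sqrt hσn.le]; field_simp
                rw [Real.sqrt_sq (Real.sqrt_nonneg _)]
            _ ≤ (1 / Real.sqrt ε) * (‖⟪ξ n, g⟫‖ / Real.sqrt (σ n)) := by gcongr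
        simp only [hqdef]
        linarith
      have h0 : 0 ≤ ‖⟪v n, y⟫‖ / σ n := by positivity
      calc ‖⟪v n, y⟫‖ ^ 2 / σ n ^ 2 = (‖⟪v n, y⟫‖ / σ n) ^ 2 := by rw [div_pow]
        _ ≤ (p n + q n) ^ 2 := by nlinarith
    refine le_trans (Finset.sum_le_sum hstep) ?_
    refine le_trans (mink Λ' p q (fun i _ => by positivity) (fun i _ => by positivity)) ?_
    have hA : Real.sqrt (∑ i ∈ Λ', p i ^ 2) ≤ (1 / Real.sqrt ε) * ‖g‖ := by
      have h1 : ∑ i ∈ Λ', p i ^ 2 = (1 / ε) * ∑ i ∈ Λ', ‖⟪ξ i, g⟫‖ ^ 2 / σ i := by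
        rw [Finset.mul_sum]
        refine Finset.sum_congr rfl fun i hi => ?_
        have hσi : (0:ℝ) < σ i := lt_trans hε (hmem i hi)
        rw [hpdef]
        simp only
        rw [mul_pow, div_pow, div_pow, Real.sq_sqrt hσi.le, Real.sq_sqrt hε.le]
        ring
      have h2 : (1 / ε) * ∑ i ∈ Λ', ‖⟪ξ i, g⟫‖ ^ 2 / σ i ≤ (1 / ε) * ‖g‖ ^ 2 := by
        have := hBes Λ' hsub
        have h1ε : (0:ℝ) ≤ 1 / ε := by positivity
        nlinarith
      rw [h1]
      refine le_trans (Real.sqrt_le_sqrt h2) ?_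
      rw [Real.sqrt_mul (by positivity), Real.sqrt_sq (norm_nonneg _), one_div, one_div,
        Real.sqrt_inv]
    have hB2 : Real.sqrt (∑ i ∈ Λ', q i ^ 2) ≤ ‖z‖ := by
      refine le_trans (Real.sqrt_le_sqrt (haB Λ')) ?_
      rw [Real.sqrt_sq (norm_nonneg _)]
    have hA0 : (0:ℝ) ≤ Real.sqrt (∑ i ∈ Λ', p i ^ 2) := Real.sqrt_nonneg _
    have hB0 : (0:ℝ) ≤ Real.sqrt (∑ i ∈ Λ', q i ^ 2) := Real.sqrt_nonneg _
    nlinarith [hA, hB2, hA0, hB0]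
  -- maximality forces Λ to contain every index with σ n > ε
  have hfull : ∀ n, ε < σ n → n ∈ Λ := by
    intro n hn
    by_contra hnΛ
    have hsub' : insert n Λ ⊆ Finset.univ.filter (fun k => ε < σ k) := by
      intro k hk
      rcases Finset.mem_insert.mp hk with h | h
      · subst h; simp [hn]
      · exact hΛsub h
    have hcard : ¬ (insert n Λ).card ≤ Λ.card := by
      rw [Finset.card_insert_of_notMem hnΛ]; omega
    have hgt : c ^ 2 * ‖y‖ ^ 2 < ∑ k ∈ insert n Λ, ‖⟪v k, y⟫‖ ^ 2 / σ k ^ 2 :=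
      lt_of_not_ge fun h => hcard (hΛmax _ hsub' h)
    have hle := hbound _ hsub'
    have hB0 : (0:ℝ) ≤ (1 / Real.sqrt ε) * ‖g‖ + ‖z‖ := by positivity
    have hlt : c * ‖y‖ < (1 / Real.sqrt ε) * ‖g‖ + ‖z‖ := by
      refine lt_of_pow_lt_pow_left₀ 2 hB0 ?_
      calc (c * ‖y‖) ^ 2 = c ^ 2 * ‖y‖ ^ 2 := by ring
        _ < _ := lt_of_lt_of_le hgt hle
    have := norm_nonneg z
    linarith
  -- final assembly
  set Pf := ∑ n ∈ Λ, (⟪ξ n, f⟫ / (σ n : ℂ)) • ξ n with hPfdef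
  set w := ∑ n ∈ Λ, a n • ξ n with hwdef
  have hPforth : ∀ m ∈ Λ, ⟪ξ m, f - Pf⟫ = 0 := by
    intro m hm
    have hσm : (0:ℝ) < σ m := lt_trans hε (Finset.mem_filter.mp (hΛsub hm)).2
    rw [inner_sub_right, hPfdef, inner_sum]
    simp only [inner_smul_right, hξξ]
    rw [Finset.sum_eq_single m]
    · rw [if_pos rfl, div_mul_cancel₀, sub_self]
      exact_mod_cast hσm.ne'
    · intro n hn hne
      rw [if_neg fun h => hne h.symm, mul_zero]
    · intro h; exact absurd hm h
  have horth : ⟪Pf - w, f - Pf⟫ = 0 := by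
    have hdiff : Pf - w = ∑ n ∈ Λ, ((⟪ξ n, f⟫ / (σ n : ℂ)) - a n) • ξ n := by
      rw [hPfdef, hwdef, ← Finset.sum_sub_distrib]
      exact Finset.sum_congr rfl fun n _ => (sub_smul _ _ _).symm
    rw [hdiff, sum_inner]
    refine Finset.sum_eq_zero fun n hn => ?_
    rw [inner_smul_left, hPforth n hn, mul_zero]
  have hle1 : ‖f - Pf‖ ≤ ‖f - w‖ := by
    have hfw : f - w = (f - Pf) + (Pf - w) := by abel
    have hz0 : ⟪f - Pf, Pf - w⟫ = (0:ℂ) := by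
      rw [← inner_conj_symm, horth, map_zero]
    have hsq : ‖f - w‖ ^ 2 = ‖f - Pf‖ ^ 2 + ‖Pf - w‖ ^ 2 := by
      rw [hfw, @norm_add_sq ℂ, hz0]
      simp
    nlinarith [norm_nonneg (f - Pf), norm_nonneg (f - w), sq_nonneg ‖Pf - w‖]
  set r := ∑ n ∈ Finset.univ \ Λ, a n • ξ n with hrdef
  have hsplit : f - w = g + r := by
    have h1 : T z = r + w := by
      rw [hTz, hwdef, hrdef, Finset.sum_sdiff (Finset.subset_univ Λ)]
    rw [hgdef, h1]
    abel
  have hinnerr : ∀ m ∈ Finset.univ \ Λ, ⟪ξ m, r⟫ = a m * (σ m : ℂ) := by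
    intro m hm
    rw [hrdef, inner_sum]
    simp only [inner_smul_right, hξξ]
    rw [Finset.sum_eq_single m]
    · rw [if_pos rfl]
    · intro n hn hne
      rw [if_neg fun h => hne h.symm, mul_zero]
    · intro h; exact absurd hm h
  have hrsq : ‖r‖ ^ 2 = ∑ n ∈ Finset.univ \ Λ, σ n * ‖a n‖ ^ 2 := by
    have h1 : (⟪r, r⟫ : ℂ) = ∑ n ∈ Finset.univ \ Λ, ((σ n * ‖a n‖ ^ 2 : ℝ) : ℂ) := by
      conv_lhs => rw [hrdef]
      rw [sum_inner]
      refine Finset.sum_congr rfl fun n hn => ?_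
      rw [inner_smul_left, hinnerr n hn]
      have hca : (starRingEnd ℂ) (a n) * a n = ((‖a n‖ ^ 2 : ℝ) : ℂ) := by
        rw [mul_comm, Complex.mul_conj, Complex.normSq_eq_norm_sq]
      calc (starRingEnd ℂ) (a n) * (a n * (σ n : ℂ))
          = ((starRingEnd ℂ) (a n) * a n) * (σ n : ℂ) := by ring
        _ = ((‖a n‖ ^ 2 : ℝ) : ℂ) * ((σ n : ℝ) : ℂ) := by rw [hca]
        _ = ((σ n * ‖a n‖ ^ 2 : ℝ) : ℂ) := by push_cast; ring
    have h2 : ‖r‖ ^ 2 = RCLike.re (⟪r, r⟫ : ℂ) := norm_sq_eq_re_inner (𝕜 := ℂ) r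
    rw [h2, h1]
    rw [show (∑ n ∈ Finset.univ \ Λ, ((σ n * ‖a n‖ ^ 2 : ℝ) : ℂ))
        = ((∑ n ∈ Finset.univ \ Λ, σ n * ‖a n‖ ^ 2 : ℝ) : ℂ) by push_cast; ring]
    exact RCLike.ofReal_re _
  have hrle : ‖r‖ ≤ Real.sqrt ε * ‖z‖ := by
    have h2 : ‖r‖ ^ 2 ≤ ε * ‖z‖ ^ 2 := by
      rw [hrsq]
      calc ∑ n ∈ Finset.univ \ Λ, σ n * ‖a n‖ ^ 2
          ≤ ∑ n ∈ Finset.univ \ Λ, ε * ‖a n‖ ^ 2 := by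
            refine Finset.sum_le_sum fun n hn => ?_
            have hσn : σ n ≤ ε :=
              le_of_not_gt fun hlt => (Finset.mem_sdiff.mp hn).2 (hfull n hlt)
            nlinarith [sq_nonneg ‖a n‖]
        _ = ε * ∑ n ∈ Finset.univ \ Λ, ‖a n‖ ^ 2 := (Finset.mul_sum _ _ _).symm
        _ ≤ ε * ‖z‖ ^ 2 := by nlinarith [haB (Finset.univ \ Λ)]
    have h3 := Real.sqrt_le_sqrt h2
    rwa [Real.sqrt_sq (norm_nonneg _), Real.sqrt_mul hε.le, Real.sqrt_sq (norm_nonneg _)] at h3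
  have hmax : Real.sqrt ε ≤ max (Real.sqrt ε)
      (‖g‖ / (c * ‖y‖ - 1 / Real.sqrt ε * ‖g‖ - 2 * ‖z‖)) := le_max_left _ _
  calc ‖f - Pf‖ ≤ ‖f - w‖ := hle1
    _ ≤ ‖g‖ + ‖r‖ := by rw [hsplit]; exact norm_add_le _ _
    _ ≤ ‖g‖ + Real.sqrt ε * ‖z‖ := by linarith
    _ ≤ ‖g‖ + max (Real.sqrt ε)
        (‖g‖ / (c * ‖y‖ - 1 / Real.sqrt ε * ‖g‖ - 2 * ‖z‖)) * ‖z‖ := by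
        have hz0 := norm_nonneg z
        nlinarith [hmax]
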